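/- Let D be an action-minimal dynamic decision network (satisfying faithfulness in the sense that no parent of the action variable can be made independent of the action by conditioning on other variables). Then a set O of observable variables is action sufficient in D if and only if the network policy π^D is executable given O, i.e., the action is conditionally independent of the latent state variables given the observed variables. -/
import Mathlib


open Finset

-- Probability of an event under a distribution on joint assignments.
open Classical in
noncomputable def prE {ι : Type*} [Fintype ι] [DecidableEq ι] {Val : ι → Type*}
    [∀ i, Fintype (Val i)]
    (P : (∀ i, Val i) → ℝ) (E : (∀ i, Val i) → Prop) : ℝ :=
  ∑ v : ∀ i, Val i, if E v then P v else 0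

/-- `v` agrees with the reference assignment `x` on the variables in `S`. -/
def Agrees {ι : Type*} {Val : ι → Type*} (S : Finset ι) (x v : ∀ i, Val i) : Prop :=
  ∀ j ∈ S, v j = x j

/-- Conditional independence of `S` and `T` given `C` under `P`. -/
def CondIndep {ι : Type*} [Fintype ι] [DecidableEq ι] (Val : ι → Type*)
    [∀ i, Fintype (Val i)]
    (P : (∀ i, Val i) → ℝ) (S T C : Finset ι) : Prop :=
  ∀ x : ∀ i, Val i,
    prE P (Agrees (S ∪ T ∪ C) x) * prE P (Agrees C x)
      = prE P (Agrees (S ∪ C) x) * prE P (Agrees (T ∪ C) x)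

section Aux
open Classical
variable {ι : Type*} [Fintype ι] [DecidableEq ι] {Val : ι → Type*} [∀ i, Fintype (Val i)]
variable (P : (∀ i, Val i) → ℝ)

lemma prE_nonneg (hP : ∀ v, 0 ≤ P v) (E : (∀ i, Val i) → Prop) : 0 ≤ prE P E := by
  classical
  unfold prE
  apply Finset.sum_nonneg
  intro v _
  split <;> simp [hP v]

lemma prE_mono (hP : ∀ v, 0 ≤ P v) {S S' : Finset ι} (h : S ⊆ S') (x : ∀ i, Val i) :
    prE P (Agrees S' x) ≤ prE P (Agrees S x) := by
  classical
  unfold prE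
  apply Finset.sum_le_sum
  intro v _
  by_cases hv : Agrees S' x v
  · have hv' : Agrees S x v := fun j hj => hv j (h hj)
    simp [hv, hv']
  · simp only [hv, if_false]
    split <;> simp [hP v]

lemma prE_congr {x x' : ∀ i, Val i} {S : Finset ι} (h : ∀ j ∈ S, x' j = x j) :
    prE P (Agrees S x') = prE P (Agrees S x) := by
  have : Agrees S x' = Agrees S x := by
    funext v
    apply propext
    exact forall₂_congr fun j hj => by rw [h j hj]
  rw [this]

lemma prE_marg {W T : Finset ι} (hd : ∀ j ∈ T, j ∉ W) (x : ∀ i, Val i) :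
    (∑ x' : ∀ i, Val i,
        if (∀ j, j ∉ T → x' j = x j) then prE P (Agrees (W ∪ T) x') else 0)
      = prE P (Agrees W x) := by
  classical
  unfold prE
  have step1 : ∀ x' : ∀ i, Val i,
      (if (∀ j, j ∉ T → x' j = x j) then
          (∑ v : ∀ i, Val i, if Agrees (W ∪ T) x' v then P v else 0) else 0)
        = ∑ v : ∀ i, Val i,
            if ((∀ j, j ∉ T → x' j = x j) ∧ Agrees (W ∪ T) x' v) then P v else 0 := by
    intro x'
    split_ifs with hc
    · exact Finset.sum_congr rfl fun v _ => (if_congr (and_iff_right hc) rfl rfl).symm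
    · rw [eq_comm]
      exact Finset.sum_eq_zero fun v _ => if_neg (fun h => hc h.1)
  simp only [step1]
  rw [Finset.sum_comm]
  apply Finset.sum_congr rfl
  intro v _
  have key : ∀ x' : ∀ i, Val i,
      ((∀ j, j ∉ T → x' j = x j) ∧ Agrees (W ∪ T) x' v)
        ↔ (x' = (fun j => if j ∈ T then v j else x j) ∧ Agrees W x v) := by
    intro x'
    constructor
    · rintro ⟨hc, hag⟩
      have hx' : x' = fun j => if j ∈ T then v j else x j := by
        funext j
        by_cases hj : j ∈ T
        · simp only [hj, if_true]
          exact (hag j (Finset.mem_union_right _ hj)).symm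
        · simp only [hj, if_false]
          exact hc j hj
      refine ⟨hx', fun j hj => ?_⟩
      have hjT : j ∉ T := fun hjT => hd j hjT hj
      rw [hag j (Finset.mem_union_left _ hj), hc j hjT]
    · rintro ⟨rfl, hW⟩
      refine ⟨fun j hj => by simp [hj], fun j hj => ?_⟩
      by_cases hjT : j ∈ T
      · simp [hjT]
      · rcases Finset.mem_union.mp hj with hjW | hjT'
        · simp only [hjT, if_false]
          exact hW j hjW
        · exact absurd hjT' hjT
  simp only [key]
  by_cases hQ : Agrees W x v
  · simp [hQ, Finset.sum_ite_eq', Finset.sum_ite_eq]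
  · simp [hQ]

lemma condIndep_decomp {S T U C : Finset ι}
    (hd : ∀ j ∈ U, j ∉ S ∪ T ∪ C)
    (h : CondIndep Val P S (T ∪ U) C) : CondIndep Val P S T C := by
  classical
  intro x
  have hdS : ∀ j ∈ U, j ∉ S := fun j hj hjS =>
    hd j hj (Finset.mem_union_left _ (Finset.mem_union_left _ hjS))
  have hdT : ∀ j ∈ U, j ∉ T := fun j hj hjT =>
    hd j hj (Finset.mem_union_left _ (Finset.mem_union_right _ hjT))
  have hdC : ∀ j ∈ U, j ∉ C := fun j hj hjC => hd j hj (Finset.mem_union_right _ hjC)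
  have e1 : S ∪ (T ∪ U) ∪ C = (S ∪ T ∪ C) ∪ U := by
    ext j; simp only [Finset.mem_union]; tauto
  have e2 : (T ∪ U) ∪ C = (T ∪ C) ∪ U := by
    ext j; simp only [Finset.mem_union]; tauto
  have key : (∑ x' : ∀ i, Val i,
      if (∀ j, j ∉ U → x' j = x j) then
        prE P (Agrees (S ∪ (T ∪ U) ∪ C) x') * prE P (Agrees C x') else 0)
    = ∑ x' : ∀ i, Val i,
      if (∀ j, j ∉ U → x' j = x j) then
        prE P (Agrees (S ∪ C) x') * prE P (Agrees ((T ∪ U) ∪ C) x') else 0 :=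
    Finset.sum_congr rfl fun x' _ => if_congr Iff.rfl (h x') rfl
  have lhs : (∑ x' : ∀ i, Val i,
      if (∀ j, j ∉ U → x' j = x j) then
        prE P (Agrees (S ∪ (T ∪ U) ∪ C) x') * prE P (Agrees C x') else 0)
    = prE P (Agrees (S ∪ T ∪ C) x) * prE P (Agrees C x) := by
    have : ∀ x' : ∀ i, Val i,
        (if (∀ j, j ∉ U → x' j = x j) then
          prE P (Agrees (S ∪ (T ∪ U) ∪ C) x') * prE P (Agrees C x') else 0)
        = (if (∀ j, j ∉ U → x' j = x j) then
            prE P (Agrees ((S ∪ T ∪ C) ∪ U) x') else 0) * prE P (Agrees C x) := by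
      intro x'
      split_ifs with hc
      · rw [e1, prE_congr P (fun j hj => hc j (hdC j · hj))]
      · rw [zero_mul]
    rw [Finset.sum_congr rfl fun x' _ => this x', ← Finset.sum_mul,
      prE_marg P (fun j hj => by
        intro hjW
        rcases Finset.mem_union.mp hjW with hjW' | hjC
        · rcases Finset.mem_union.mp hjW' with h1 | h2
          · exact hdS j hj h1
          · exact hdT j hj h2
        · exact hdC j hj hjC) x]
  have rhs : (∑ x' : ∀ i, Val i,
      if (∀ j, j ∉ U → x' j = x j) then
        prE P (Agrees (S ∪ C) x') * prE P (Agrees ((T ∪ U) ∪ C) x') else 0)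
    = prE P (Agrees (S ∪ C) x) * prE P (Agrees (T ∪ C) x) := by
    have : ∀ x' : ∀ i, Val i,
        (if (∀ j, j ∉ U → x' j = x j) then
          prE P (Agrees (S ∪ C) x') * prE P (Agrees ((T ∪ U) ∪ C) x') else 0)
        = prE P (Agrees (S ∪ C) x) * (if (∀ j, j ∉ U → x' j = x j) then
            prE P (Agrees ((T ∪ C) ∪ U) x') else 0) := by
      intro x'
      split_ifs with hc
      · rw [e2, prE_congr P (fun j hj => hc j (fun hjU => by
          rcases Finset.mem_union.mp hj with h1 | h2
          · exact hdS j hjU h1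
          · exact hdC j hjU h2))]
      · rw [mul_zero]
    rw [Finset.sum_congr rfl fun x' _ => this x', ← Finset.mul_sum,
      prE_marg P (fun j hj => by
        intro hjW
        rcases Finset.mem_union.mp hjW with h1 | h2
        · exact hdT j hj h1
        · exact hdC j hj h2) x]
  rw [← lhs, key, rhs]

end Aux

/-- for an action-minimal dynamic decision network, a set `O` of
observable variables is action sufficient (all parents of the action `A`
other than the belief `B` are in `O`) **iff** the network policy is executable
given `O`, i.e. the action is conditionally independent of the contemporaneous
latent state variables given the observables (together with `B`). -/
theorem ddn_action_sufficient_iff_executable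
    {ι : Type*} [Fintype ι] [DecidableEq ι]
    (Val : ι → Type*) [∀ i, Fintype (Val i)]
    (pa : ι → Finset ι) (slice : ι → Fin 2)
    (A R B : ι) (O : Finset ι)
    (P : (∀ i, Val i) → ℝ)
    (hPnonneg : ∀ v, 0 ≤ P v)
    -- local Markov condition
    (hMarkov : ∀ i : ι, ∀ T : Finset ι,
        (∀ j ∈ T, j ≠ i ∧ j ∉ pa i ∧ ¬ Relation.TransGen (fun u w => u ∈ pa w) i j) →
        CondIndep Val P {i} T (pa i))
    -- structural DDN assumptions
    (htime : ∀ i j : ι, i ∈ pa j → ¬ (slice i = 1 ∧ slice j = 0))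
    (hR : ∀ j : ι, R ∈ pa j → slice j = 1)
    (hA : ∀ j : ι, A ∈ pa j → slice j = 0 → j = R)
    (hRA : R ∉ pa A)
    (hsliceA : slice A = 0) (hsliceR : slice R = 0) (hsliceB : slice B = 0)
    (hAR : A ≠ R) (hBA : B ≠ A) (hBR : B ≠ R)
    (hO : ∀ j ∈ O, slice j = 0 ∧ j ≠ A ∧ j ≠ R ∧ j ≠ B)
    -- action-minimality (faithfulness for the action variable): no parent of A
    -- can be made independent of A by conditioning on other variables
    (hmin : ∀ X ∈ pa A, ∀ U : Finset ι, A ∉ U → X ∉ U → ¬ CondIndep Val P {A} {X} U) :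
    pa A ⊆ insert B O ↔
      CondIndep Val P {A}
        (Finset.univ.filter fun j => slice j = 0 ∧ j ∉ O ∧ j ≠ A ∧ j ≠ R ∧ j ≠ B)
        (insert B O) := by
  classical
  set C : Finset ι := insert B O with hCdef
  set L : Finset ι :=
    (Finset.univ.filter fun j => slice j = 0 ∧ j ∉ O ∧ j ≠ A ∧ j ≠ R ∧ j ≠ B) with hLdef
  have hmemL : ∀ j, j ∈ L ↔ (slice j = 0 ∧ j ∉ O ∧ j ≠ A ∧ j ≠ R ∧ j ≠ B) := by
    intro j; simp [hLdef]
  have hmemC : ∀ j, j ∈ C ↔ (j = B ∨ j ∈ O) := by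
    intro j; simp [hCdef]
  have hAnotC : A ∉ C := by
    rw [hmemC]
    rintro (h | h)
    · exact hBA h.symm
    · exact (hO A h).2.1 rfl
  have hLC : ∀ j ∈ L, j ∉ C := by
    intro j hj hjC
    rw [hmemL] at hj
    rcases (hmemC j).mp hjC with h | h
    · exact hj.2.2.2.2 h
    · exact hj.2.1 h
  have hAnoself : A ∉ pa A := fun h => hAR (hA A h hsliceA)
  -- descendants of A in slice 0 are only R
  have hdesc : ∀ j, Relation.TransGen (fun u w => u ∈ pa w) A j → slice j = 1 ∨ j = R := by
    intro j htg
    induction htg with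
    | @single b h =>
      by_cases hs : slice b = 0
      · exact Or.inr (hA _ h hs)
      · exact Or.inl (by omega)
    | tail _ h2 ih =>
      rcases ih with h1 | h1
      · left
        have := htime _ _ h2
        omega
      · subst h1
        exact Or.inl (hR _ h2)
  constructor
  · -- action sufficiency → executability
    intro hsub
    set T₀ : Finset ι := L ∪ (C \ pa A) with hT₀def
    have hT₀ : ∀ j ∈ T₀, j ≠ A ∧ j ∉ pa A ∧ ¬ Relation.TransGen (fun u w => u ∈ pa w) A j := by
      intro j hj
      have hprop : slice j = 0 ∧ j ≠ R ∧ j ≠ A ∧ j ∉ pa A := by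
        rcases Finset.mem_union.mp hj with hjL | hjC'
        · have h := (hmemL j).mp hjL
          exact ⟨h.1, h.2.2.2.1, h.2.2.1, fun hp => hLC j hjL (hsub hp)⟩
        · have hjC := (Finset.mem_sdiff.mp hjC').1
          have hjp := (Finset.mem_sdiff.mp hjC').2
          rcases (hmemC j).mp hjC with h | h
          · subst h; exact ⟨hsliceB, hBR, hBA, hjp⟩
          · have := hO j h
            exact ⟨this.1, this.2.2.1, this.2.1, hjp⟩
      refine ⟨hprop.2.2.1, hprop.2.2.2, fun htg => ?_⟩
      rcases hdesc j htg with h | h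
      · rw [hprop.1] at h; exact absurd h (by omega)
      · exact hprop.2.1 h
    have H1 : CondIndep Val P {A} ((C \ pa A) ∪ L) (pa A) := by
      have := hMarkov A T₀ hT₀
      rwa [hT₀def, Finset.union_comm] at this
    have hdU : ∀ j ∈ L, j ∉ {A} ∪ (C \ pa A) ∪ pa A := by
      intro j hj hjmem
      have h := (hmemL j).mp hj
      rcases Finset.mem_union.mp hjmem with h1 | h1
      · rcases Finset.mem_union.mp h1 with h2 | h2
        · exact h.2.2.1 (Finset.mem_singleton.mp h2)
        · exact hLC j hj (Finset.mem_sdiff.mp h2).1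
      · exact hLC j hj (hsub h1)
    have H2 : CondIndep Val P {A} (C \ pa A) (pa A) := condIndep_decomp P hdU H1
    have e1 : {A} ∪ ((C \ pa A) ∪ L) ∪ pa A = {A} ∪ L ∪ C := by
      ext j
      have := @hsub j
      simp only [Finset.mem_union, Finset.mem_sdiff, Finset.mem_singleton]
      tauto
    have e2 : ((C \ pa A) ∪ L) ∪ pa A = L ∪ C := by
      ext j
      have := @hsub j
      simp only [Finset.mem_union, Finset.mem_sdiff, Finset.mem_singleton]
      tauto
    have e3 : {A} ∪ (C \ pa A) ∪ pa A = {A} ∪ C := by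
      ext j
      have := @hsub j
      simp only [Finset.mem_union, Finset.mem_sdiff, Finset.mem_singleton]
      tauto
    have e4 : (C \ pa A) ∪ pa A = C := by
      ext j
      have := @hsub j
      simp only [Finset.mem_union, Finset.mem_sdiff, Finset.mem_singleton]
      tauto
    intro x
    have h1x := H1 x
    rw [e1, e2] at h1x
    have h2x := H2 x
    rw [e3, e4] at h2x
    by_cases hp : prE P (Agrees (pa A) x) = 0
    · have hc : prE P (Agrees C x) = 0 :=
        le_antisymm (hp ▸ prE_mono P hPnonneg hsub x) (prE_nonneg P hPnonneg _)
      have hlc : prE P (Agrees (L ∪ C) x) = 0 :=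
        le_antisymm (hc ▸ prE_mono P hPnonneg Finset.subset_union_right x)
          (prE_nonneg P hPnonneg _)
      rw [hc, hlc, mul_zero, mul_zero]
    · apply mul_right_cancel₀ hp
      linear_combination prE P (Agrees C x) * h1x - prE P (Agrees (L ∪ C) x) * h2x
  · -- executability → action sufficiency
    intro hCI
    intro X hX
    by_contra hXC
    have hXA : X ≠ A := fun h => hAnoself (h ▸ hX)
    have hXR : X ≠ R := fun h => hRA (h ▸ hX)
    have hX0 : slice X = 0 := by
      have := htime X A hX
      omega
    have hXB : X ≠ B := fun h => hXC ((hmemC X).mpr (Or.inl h))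
    have hXO : X ∉ O := fun h => hXC ((hmemC X).mpr (Or.inr h))
    have hXL : X ∈ L := (hmemL X).mpr ⟨hX0, hXO, hXA, hXR, hXB⟩
    have hd : ∀ j ∈ L \ {X}, j ∉ {A} ∪ {X} ∪ C := by
      intro j hj hjmem
      have hjL := (Finset.mem_sdiff.mp hj).1
      have hjX := (Finset.mem_sdiff.mp hj).2
      have h := (hmemL j).mp hjL
      rcases Finset.mem_union.mp hjmem with h1 | h1
      · rcases Finset.mem_union.mp h1 with h2 | h2
        · exact h.2.2.1 (Finset.mem_singleton.mp h2)
        · exact hjX h2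
      · exact hLC j hjL h1
    have hL' : {X} ∪ (L \ {X}) = L := by
      ext j
      simp only [Finset.mem_union, Finset.mem_sdiff, Finset.mem_singleton]
      constructor
      · rintro (h | h)
        · subst h; exact hXL
        · exact h.1
      · intro h
        by_cases hj : j = X <;> tauto
    have hCIX : CondIndep Val P {A} {X} C := by
      apply condIndep_decomp P hd
      rwa [hL']
    exact hmin X hX C hAnotC hXC hCIX
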